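/- Let k and j be integers with 1 ≤ j ≤ k−1, let V be a set of n vertices, let J ⊆ V with |J| = j, let W ⊆ V with J ⊆ W and |W| = w, and let 𝒢 be a family of j-subsets of V. Then the number of k-subsets K of V such that J ⊆ K, (K∖J) ∩ W = ∅, and no member J' of 𝒢 with J' ≠ J satisfies J' ⊆ K, is at least C(n−w, k−j) − Σ_{i=0}^{j−1} C(j,i)·Δ_i(𝒢)·C(n, k−2j+i), where by convention C(n,m) = 0 whenever m < 0. -/

import Mathlib

/-- `Δ_i(𝒢)`: the maximum, over all `i`-subsets `I` of the (finite) vertex set `V`, of the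
number of members of `𝒢` containing `I`. -/
def maxDegree {V : Type*} [Fintype V] [DecidableEq V] (𝒢 : Finset (Finset V)) (i : ℕ) : ℕ :=
  (Finset.powersetCard i (Finset.univ : Finset V)).sup fun I =>
    (𝒢.filter fun J => I ⊆ J).card

open Finset in
/-- The number of `k`-subsets of a finite type containing a fixed set `M` is at most
`n.choose (k - M.card)`. -/
lemma card_supersets_le {V : Type*} [Fintype V] [DecidableEq V] (M : Finset V) (k : ℕ) :
    ((Finset.powersetCard k (Finset.univ : Finset V)).filter fun K => M ⊆ K).card
      ≤ (Fintype.card V).choose (k - M.card) := by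
  classical
  have h := Finset.card_le_card_of_injOn (f := fun K => K \ M)
    (s := (Finset.powersetCard k (Finset.univ : Finset V)).filter fun K => M ⊆ K)
    (t := Finset.powersetCard (k - M.card) (Finset.univ : Finset V)) ?_ ?_
  · simpa [Finset.card_powersetCard] using h
  · intro K hK
    simp only [Finset.mem_filter, Finset.mem_coe, Finset.mem_powersetCard] at hK ⊢
    refine ⟨Finset.subset_univ _, ?_⟩
    rw [Finset.card_sdiff_of_subset hK.2, hK.1.2]
  · intro K1 h1 K2 h2 he
    have he' : K1 \ M = K2 \ M := he
    simp only [Finset.coe_filter, Finset.mem_powersetCard, Set.mem_setOf_eq] at h1 h2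
    have e1 : K1 = K1 \ M ∪ M := by
      rw [Finset.sdiff_union_self_eq_union, Finset.union_eq_left.2 h1.2]
    have e2 : K2 = K2 \ M ∪ M := by
      rw [Finset.sdiff_union_self_eq_union, Finset.union_eq_left.2 h2.2]
    rw [e1, e2, he']

theorem count_available_ksets
    (k j n w : ℕ) (hj1 : 1 ≤ j) (hjk : j + 1 ≤ k)
    {V : Type*} [Fintype V] [DecidableEq V] (hn : Fintype.card V = n)
    (J W : Finset V) (hJ : J.card = j) (hJW : J ⊆ W) (hW : W.card = w)
    (𝒢 : Finset (Finset V)) (h𝒢 : ∀ G ∈ 𝒢, G.card = j) :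
    ((n - w).choose (k - j) : ℤ) -
        ∑ i ∈ Finset.range j, (j.choose i : ℤ) * (maxDegree 𝒢 i : ℤ) *
          (if 2 * j ≤ k + i then (n.choose (k + i - 2 * j) : ℤ) else 0) ≤
      (((Finset.powersetCard k (Finset.univ : Finset V)).filter fun K =>
        J ⊆ K ∧ (K \ J) ∩ W = ∅ ∧ ∀ J' ∈ 𝒢, J' ≠ J → ¬ J' ⊆ K).card : ℤ) := by
  classical
  set A : Finset (Finset V) :=
    (Finset.powersetCard k (Finset.univ : Finset V)).filter
      fun K => J ⊆ K ∧ (K \ J) ∩ W = ∅ with hA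
  set T : Finset (Finset V) :=
    (Finset.powersetCard k (Finset.univ : Finset V)).filter
      fun K => J ⊆ K ∧ (K \ J) ∩ W = ∅ ∧ ∀ J' ∈ 𝒢, J' ≠ J → ¬ J' ⊆ K with hT
  set Bl : Finset (Finset V) :=
    A.filter fun K => ¬ ∀ J' ∈ 𝒢, J' ≠ J → ¬ J' ⊆ K with hBl
  have hTA : T = A.filter fun K => ∀ J' ∈ 𝒢, J' ≠ J → ¬ J' ⊆ K := by
    rw [hT, hA, Finset.filter_filter]
    congr 1
    ext K
    tauto
  have hsplit : T.card + Bl.card = A.card := by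
    rw [hTA, hBl]
    exact Finset.card_filter_add_card_filter_not _
  -- lower bound on A
  have hAcard : (n - w).choose (k - j) ≤ A.card := by
    have h := Finset.card_le_card_of_injOn (f := fun S => S ∪ J)
      (s := Finset.powersetCard (k - j) Wᶜ) (t := A) ?_ ?_
    · rwa [Finset.card_powersetCard, Finset.card_compl, hW, hn] at h
    · intro S hS
      rw [Finset.mem_coe, Finset.mem_powersetCard] at hS
      obtain ⟨hSW, hScard⟩ := hS
      have hdisj : Disjoint S J := by
        refine Finset.disjoint_left.2 fun a ha haJ => ?_
        exact (Finset.mem_compl.1 (hSW ha)) (hJW haJ)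
      rw [Finset.mem_coe, hA, Finset.mem_filter, Finset.mem_powersetCard]
      refine ⟨⟨Finset.subset_univ _, ?_⟩, Finset.subset_union_right, ?_⟩
      · rw [Finset.card_union_of_disjoint hdisj, hScard, hJ]
        omega
      · rw [Finset.union_sdiff_right, Finset.sdiff_eq_self_of_disjoint hdisj]
        refine Finset.eq_empty_of_forall_notMem fun a ha => ?_
        rw [Finset.mem_inter] at ha
        exact (Finset.mem_compl.1 (hSW ha.1)) ha.2
    · intro S1 h1 S2 h2 he
      have he' : S1 ∪ J = S2 ∪ J := he
      rw [Finset.mem_coe, Finset.mem_powersetCard] at h1 h2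
      have d1 : Disjoint S1 J := Finset.disjoint_left.2 fun a ha haJ =>
        (Finset.mem_compl.1 (h1.1 ha)) (hJW haJ)
      have d2 : Disjoint S2 J := Finset.disjoint_left.2 fun a ha haJ =>
        (Finset.mem_compl.1 (h2.1 ha)) (hJW haJ)
      have : (S1 ∪ J) \ J = (S2 ∪ J) \ J := by rw [he']
      rwa [Finset.union_sdiff_right, Finset.union_sdiff_right,
        Finset.sdiff_eq_self_of_disjoint d1, Finset.sdiff_eq_self_of_disjoint d2] at this
  -- fiber sizes: members of 𝒢.erase J meet J in fewer than j points
  have hfib : ∀ J' ∈ 𝒢.erase J, (J' ∩ J).card < j := by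
    intro J' hJ'
    obtain ⟨hne, hmem⟩ := Finset.mem_erase.1 hJ'
    have hcard : J'.card = j := h𝒢 J' hmem
    by_contra h
    push_neg at h
    have hsub : J' ∩ J ⊆ J' := Finset.inter_subset_left
    have : J' ⊆ J' ∩ J := by
      apply Finset.subset_iff.2
      intro a ha
      have heq : J' ∩ J = J' := Finset.eq_of_subset_of_card_le hsub (by omega)
      rw [heq]; exact ha
    have : J' ⊆ J := this.trans Finset.inter_subset_right
    exact hne (Finset.eq_of_subset_of_card_le this (by omega))
  -- the term bound
  set t : ℕ → ℕ := fun i => if 2 * j ≤ k + i then n.choose (k + i - 2 * j) else 0 with ht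
  have hterm : ∀ J' ∈ 𝒢.erase J,
      ((Finset.powersetCard k (Finset.univ : Finset V)).filter fun K => J ∪ J' ⊆ K).card
        ≤ t ((J' ∩ J).card) := by
    intro J' hJ'
    obtain ⟨hne, hmem⟩ := Finset.mem_erase.1 hJ'
    have hcard : J'.card = j := h𝒢 J' hmem
    have hM : (J ∪ J').card = 2 * j - (J' ∩ J).card := by
      have := Finset.card_union_add_card_inter J J'
      rw [hJ, hcard, Finset.inter_comm] at this
      omega
    have hilt : (J' ∩ J).card < j := hfib J' hJ'
    by_cases hc : 2 * j ≤ k + (J' ∩ J).card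
    · have hk : k - (J ∪ J').card = k + (J' ∩ J).card - 2 * j := by omega
      calc ((Finset.powersetCard k (Finset.univ : Finset V)).filter
              fun K => J ∪ J' ⊆ K).card
          ≤ (Fintype.card V).choose (k - (J ∪ J').card) := card_supersets_le _ _
        _ = t ((J' ∩ J).card) := by rw [ht, hn, hk]; simp [hc]
    · have hempty : ((Finset.powersetCard k (Finset.univ : Finset V)).filter
          fun K => J ∪ J' ⊆ K) = ∅ := by
        refine Finset.eq_empty_of_forall_notMem fun K hK => ?_
        rw [Finset.mem_filter, Finset.mem_powersetCard] at hK
        have := Finset.card_le_card hK.2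
        rw [hM, hK.1.2] at this
        omega
      rw [hempty]
      simp
  -- blocked sets are covered by supersets of J ∪ J'
  have hBlsub : Bl ⊆ (𝒢.erase J).biUnion fun J' =>
      (Finset.powersetCard k (Finset.univ : Finset V)).filter fun K => J ∪ J' ⊆ K := by
    intro K hK
    rw [hBl, Finset.mem_filter] at hK
    obtain ⟨hKA, hKb⟩ := hK
    push_neg at hKb
    obtain ⟨J', hJ'mem, hJ'ne, hJ'sub⟩ := hKb
    rw [hA, Finset.mem_filter] at hKA
    rw [Finset.mem_biUnion]
    exact ⟨J', Finset.mem_erase.2 ⟨hJ'ne, hJ'mem⟩,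
      Finset.mem_filter.2 ⟨hKA.1, Finset.union_subset hKA.2.1 hJ'sub⟩⟩
  have hBlcard : Bl.card ≤ ∑ J' ∈ 𝒢.erase J, t ((J' ∩ J).card) :=
    (Finset.card_le_card hBlsub).trans
      ((Finset.card_biUnion_le).trans (Finset.sum_le_sum hterm))
  -- group by fiber
  have hgroup : ∑ J' ∈ 𝒢.erase J, t ((J' ∩ J).card)
      = ∑ i ∈ Finset.range j,
          ∑ J' ∈ (𝒢.erase J).filter (fun J' => (J' ∩ J).card = i), t i := by
    rw [← Finset.sum_fiberwise_of_maps_to (fun J' hJ' => Finset.mem_range.2 (hfib J' hJ'))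
      (fun J' => t ((J' ∩ J).card))]
    refine Finset.sum_congr rfl fun i _ => Finset.sum_congr rfl fun J' hJ' => ?_
    rw [(Finset.mem_filter.1 hJ').2]
  -- fiber cardinality bound
  have hfibcard : ∀ i ∈ Finset.range j,
      ((𝒢.erase J).filter (fun J' => (J' ∩ J).card = i)).card
        ≤ j.choose i * maxDegree 𝒢 i := by
    intro i _
    have hsub : (𝒢.erase J).filter (fun J' => (J' ∩ J).card = i)
        ⊆ (Finset.powersetCard i J).biUnion fun I => 𝒢.filter fun J' => I ⊆ J' := by
      intro J' hJ'
      rw [Finset.mem_filter, Finset.mem_erase] at hJ'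
      rw [Finset.mem_biUnion]
      exact ⟨J' ∩ J, Finset.mem_powersetCard.2 ⟨Finset.inter_subset_right, hJ'.2⟩,
        Finset.mem_filter.2 ⟨hJ'.1.2, Finset.inter_subset_left⟩⟩
    calc ((𝒢.erase J).filter (fun J' => (J' ∩ J).card = i)).card
        ≤ ∑ I ∈ Finset.powersetCard i J, (𝒢.filter fun J' => I ⊆ J').card :=
          (Finset.card_le_card hsub).trans Finset.card_biUnion_le
      _ ≤ ∑ _I ∈ Finset.powersetCard i J, maxDegree 𝒢 i := by
          refine Finset.sum_le_sum fun I hI => ?_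
          refine Finset.le_sup (f := fun I => (𝒢.filter fun J => I ⊆ J).card) ?_
          rw [Finset.mem_powersetCard] at hI ⊢
          exact ⟨Finset.subset_univ _, hI.2⟩
      _ = j.choose i * maxDegree 𝒢 i := by
          rw [Finset.sum_const, smul_eq_mul, Finset.card_powersetCard, hJ]
  -- total bound on blocked
  have hBltotal : Bl.card ≤ ∑ i ∈ Finset.range j, j.choose i * maxDegree 𝒢 i * t i := by
    refine hBlcard.trans ?_
    rw [hgroup]
    refine Finset.sum_le_sum fun i hi => ?_
    rw [Finset.sum_const, smul_eq_mul]
    exact Nat.mul_le_mul_right _ (hfibcard i hi)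
  -- conclusion
  have hcast : (∑ i ∈ Finset.range j, j.choose i * maxDegree 𝒢 i * t i : ℤ)
      = ∑ i ∈ Finset.range j, (j.choose i : ℤ) * (maxDegree 𝒢 i : ℤ) *
          (if 2 * j ≤ k + i then (n.choose (k + i - 2 * j) : ℤ) else 0) := by
    push_cast [ht, apply_ite (fun m : ℕ => (m : ℤ))]
    rfl
  have h1 : ((n - w).choose (k - j) : ℤ) ≤ (A.card : ℤ) := by exact_mod_cast hAcard
  have h2 : (Bl.card : ℤ) ≤ ∑ i ∈ Finset.range j, (j.choose i : ℤ) * (maxDegree 𝒢 i : ℤ) *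
      (if 2 * j ≤ k + i then (n.choose (k + i - 2 * j) : ℤ) else 0) := by
    rw [← hcast]
    exact_mod_cast hBltotal
  have h3 : (T.card : ℤ) + (Bl.card : ℤ) = (A.card : ℤ) := by exact_mod_cast hsplit
  linarith
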